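/- arXiv:2408.17383 — 3 statements merged into one kernel-verified Lean document; each statement's English description precedes it below -/
import Mathlib

section
/- Let M = P₁ L P₂ R with N = r (square Monarch factors: L and R block-diagonal with N square blocks of size m = n/N, n = N·m, P₂ the perfect-shuffle permutation). Then, reshaping M as a 4-tensor M_{l j k i} (l,i ∈ {1,…,m}, j,k ∈ {1,…,N}), each m×m slice M_{:,j,k,:} has rank at most 1. -/
open Matrix

/-- The perfect-shuffle permutation matrix on `Fin m × Fin m` (it sends position
`(k−1)m + i` to `(i−1)m + k`, i.e. swaps the two index coordinates). -/
def shuffle (m : ℕ) : Matrix (Fin m × Fin m) (Fin m × Fin m) ℝ :=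
  Matrix.of fun a b => if a = b.swap then 1 else 0

/-- Block-diagonal matrix on `Fin m × Fin m` with block index in the first coordinate. -/
def BD {m : ℕ} (L : Fin m → Matrix (Fin m) (Fin m) ℝ) :
    Matrix (Fin m × Fin m) (Fin m × Fin m) ℝ :=
  Matrix.of fun a b => if a.1 = b.1 then L a.1 a.2 b.2 else 0

lemma monarch_entry (m : ℕ) (L R : Fin m → Matrix (Fin m) (Fin m) ℝ)
    (j k l i : Fin m) :
    (shuffle m * BD L * shuffle m * BD R) (l, j) (k, i) = L j l k * R k j i := by
  simp only [shuffle, BD, Matrix.mul_apply, Matrix.of_apply, Fintype.sum_prod_type,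
    Prod.swap, Prod.mk.injEq, ite_and]
  simp [Finset.sum_ite_eq, Finset.sum_ite_eq', Finset.mul_sum, Finset.sum_mul]

/-- Monarch structure theorem (forward direction): for `M = P₁ L P₂ R` with square
block-diagonal factors and perfect-shuffle permutations, every slice `M_{:,j,k,:}` of the
reshaped 4-tensor has rank at most 1. -/
theorem monarch_slices_rank_le_one (m : ℕ) (L R : Fin m → Matrix (Fin m) (Fin m) ℝ) :
    ∀ j k : Fin m,
      (Matrix.of fun l i : Fin m =>
        (shuffle m * BD L * shuffle m * BD R) (l, j) (k, i)).rank ≤ 1 := by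
  intro j k
  have : (Matrix.of fun l i : Fin m =>
      (shuffle m * BD L * shuffle m * BD R) (l, j) (k, i)) =
      Matrix.vecMulVec (fun l => L j l k) (fun i => R k j i) := by
    ext l i
    simp [monarch_entry, Matrix.vecMulVec_apply]
  rw [this, Matrix.vecMulVec_eq (Fin 1)]
  exact (Matrix.rank_mul_le_left _ _).trans
    ((Matrix.rank_le_card_width _).trans (by simp))
end

section
/- Conversely, any matrix A ∈ ℝ^{n×n} (n = N m) whose reshaped slices A_{:,j,k,:} ∈ ℝ^{m×m} all have rank at most 1 can be written as a Monarch matrix M = P₁ L P₂ R with N square blocks. -/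
open Matrix

/-- A matrix of rank at most 1 over `ℝ` is an outer product `u vᵀ`. -/
lemma exists_outer {m : ℕ} (M : Matrix (Fin m) (Fin m) ℝ) (h : M.rank ≤ 1) :
    ∃ u v : Fin m → ℝ, ∀ l i, M l i = u l * v i := by
  rw [Matrix.rank] at h
  obtain ⟨v₀, hv₀⟩ := finrank_le_one_iff.mp h
  choose c hc using fun i => hv₀ ⟨M.mulVecLin (Pi.single i 1), LinearMap.mem_range_self _ _⟩
  refine ⟨fun l => (v₀ : Fin m → ℝ) l, c, fun l i => ?_⟩
  have h2 := congrArg (fun w => (w : Fin m → ℝ) l) (congrArg Subtype.val (hc i))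
  simp [Matrix.mulVecLin_apply, Matrix.mulVec_single] at h2
  rw [← h2, mul_comm]

/-- Monarch structure theorem (converse direction): any matrix whose reshaped slices
`A_{:,j,k,:}` all have rank at most 1 can be written as a Monarch matrix `P₁ L P₂ R`
with square block-diagonal factors. -/
theorem rank_one_slices_is_monarch (m : ℕ)
    (A : Matrix (Fin m × Fin m) (Fin m × Fin m) ℝ)
    (h : ∀ j k : Fin m,
      (Matrix.of fun l i : Fin m => A (l, j) (k, i)).rank ≤ 1) :
    ∃ L R : Fin m → Matrix (Fin m) (Fin m) ℝ,
      A = shuffle m * BD L * shuffle m * BD R := by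
  choose u v hu using fun j k => exists_outer _ (h j k)
  refine ⟨fun j => Matrix.of fun l k => u j k l,
          fun k => Matrix.of fun j i => v j k i, ?_⟩
  ext ⟨l, j⟩ ⟨k, i⟩
  have key := hu j k l i
  simp only [Matrix.of_apply] at key
  simp [Matrix.mul_apply, shuffle, BD, Fintype.sum_prod_type, Prod.ext_iff,
    ite_mul, mul_ite, zero_mul, mul_zero, ite_and, Finset.sum_ite_eq,
    Finset.sum_ite_eq', key]
end

section
/- Let E ∈ ℝ^{n×n}, n = m², with blocks E_{jk}. The minimal Frobenius error of approximating E by a square-block Monarch matrix (N = r = m) equals the square root of Σ_{j,k} Σ_{i≥2} σ_i²(Ẽ_{:,j,k,:}), where Ẽ is E reshaped into a 4-tensor according to the Monarch permutations; in particular the minimum is 0 iff every slice Ẽ_{:,j,k,:} has rank at most 1. -/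
open Matrix

section Aux
variable {m : ℕ}

lemma shuffle_mul (X : Matrix (Fin m × Fin m) (Fin m × Fin m) ℝ)
    (a b : Fin m × Fin m) : (shuffle m * X) a b = X a.swap b := by
  rw [Matrix.mul_apply]
  rw [Finset.sum_eq_single a.swap]
  · simp [shuffle]
  · intro c _ hc
    have : a ≠ c.swap := fun h => hc (by simp [h])
    simp [shuffle, this]
  · simp

lemma monarch_apply (L R : Fin m → Matrix (Fin m) (Fin m) ℝ)
    (l j k i : Fin m) :
    (shuffle m * BD L * shuffle m * BD R) ((l,j)) ((k,i)) = L j l k * R k j i := by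
  rw [mul_assoc, mul_assoc, shuffle_mul, Matrix.mul_apply]
  rw [Finset.sum_eq_single ((j,k) : Fin m × Fin m)]
  · rw [shuffle_mul]; simp [BD]
  · rintro ⟨c1, c2⟩ _ hc
    rw [shuffle_mul]
    simp only [BD, Matrix.of_apply, Prod.swap]
    by_cases h1 : (j:Fin m) = c1
    · by_cases h2 : (c2:Fin m) = k
      · exact absurd (by rw [← h1, h2]) hc
      · simp [h2]
    · simp [h1]
  · simp

lemma total_sum (E : Matrix (Fin m × Fin m) (Fin m × Fin m) ℝ)
    (L R : Fin m → Matrix (Fin m) (Fin m) ℝ) :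
    ∑ p : Fin m × Fin m, ∑ q : Fin m × Fin m,
        ((E - shuffle m * BD L * shuffle m * BD R) p q) ^ 2 =
      ∑ j, ∑ k, ∑ l, ∑ i, (E (l,j) (k,i) - L j l k * R k j i) ^ 2 := by
  simp_rw [Fintype.sum_prod_type]
  simp only [Matrix.sub_apply, monarch_apply]
  rw [Finset.sum_comm]
  apply Finset.sum_congr rfl
  intro j _
  rw [Finset.sum_comm]

lemma frob_col (Y : Matrix (Fin m) (Fin m) ℝ) :
    ∑ l, ∑ i, (Y l i) ^ 2 = ∑ i, (Yᵀ * Y) i i := by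
  rw [Finset.sum_comm]
  simp [Matrix.mul_apply, sq]

lemma frob_mul_left {U : Matrix (Fin m) (Fin m) ℝ} (hU : Uᵀ * U = 1)
    (X : Matrix (Fin m) (Fin m) ℝ) :
    ∑ l, ∑ i, ((U * X) l i) ^ 2 = ∑ l, ∑ i, (X l i) ^ 2 := by
  rw [frob_col, frob_col X]
  congr 1
  rw [transpose_mul, mul_assoc, ← mul_assoc Uᵀ, hU, one_mul]

lemma frob_mul_right {V : Matrix (Fin m) (Fin m) ℝ} (hV : Vᵀ * V = 1)
    (X : Matrix (Fin m) (Fin m) ℝ) :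
    ∑ l, ∑ i, ((X * Vᵀ) l i) ^ 2 = ∑ l, ∑ i, (X l i) ^ 2 := by
  have frob_row : ∀ Y : Matrix (Fin m) (Fin m) ℝ,
      ∑ l, ∑ i, (Y l i) ^ 2 = ∑ l, (Y * Yᵀ) l l := by
    intro Y; simp [Matrix.mul_apply, sq]
  have key : X * Vᵀ * (X * Vᵀ)ᵀ = X * Xᵀ := by
    rw [transpose_mul, transpose_transpose, mul_assoc, ← mul_assoc Vᵀ, hV, one_mul]
  rw [frob_row, frob_row X, key]

lemma conj_vecMulVec (U V : Matrix (Fin m) (Fin m) ℝ) (u v : Fin m → ℝ) :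
    Uᵀ * vecMulVec u v * V = vecMulVec (Uᵀ *ᵥ u) (Vᵀ *ᵥ v) := by
  ext a b
  simp only [Matrix.mul_apply, vecMulVec_apply, mulVec, dotProduct,
    transpose_apply, Finset.sum_mul, Finset.mul_sum]
  apply Finset.sum_congr rfl
  intro c _
  apply Finset.sum_congr rfl
  intro d _
  ring

lemma tail_split (hm : 0 < m) (σ : Fin m → ℝ) :
    ∑ i, σ i ^ 2 = σ ⟨0, hm⟩ ^ 2 +
      ∑ i ∈ Finset.univ.filter (fun i : Fin m => 1 ≤ (i : ℕ)), σ i ^ 2 := by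
  have h := Finset.sum_filter_add_sum_filter_not Finset.univ
    (fun i : Fin m => 1 ≤ (i : ℕ)) (fun i => σ i ^ 2)
  have hnot : Finset.univ.filter (fun i : Fin m => ¬ 1 ≤ (i : ℕ)) = {⟨0, hm⟩} := by
    ext i
    simp only [Finset.mem_filter, Finset.mem_univ, true_and, Finset.mem_singleton]
    constructor
    · intro h; exact Fin.ext (by simp; omega)
    · intro h; subst h; simp
  rw [hnot, Finset.sum_singleton] at h
  linarith

lemma diag_lb (hm : 0 < m) (σ : Fin m → ℝ) (hA : Antitone σ) (h0 : ∀ i, 0 ≤ σ i)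
    (u v : Fin m → ℝ) :
    ∑ i ∈ Finset.univ.filter (fun i : Fin m => 1 ≤ (i : ℕ)), σ i ^ 2 ≤
      ∑ l, ∑ i, ((Matrix.diagonal σ) l i - u l * v i) ^ 2 := by
  set z : Fin m := ⟨0, hm⟩ with hz
  have expand : ∑ l, ∑ i, ((Matrix.diagonal σ) l i - u l * v i) ^ 2 =
      (∑ i, σ i ^ 2) - 2 * (∑ i, σ i * (u i * v i)) +
        (∑ l, u l ^ 2) * (∑ i, v i ^ 2) := by
    have pt : ∀ l i : Fin m, ((Matrix.diagonal σ) l i - u l * v i) ^ 2 =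
        (if i = l then σ l ^ 2 else 0) - 2 * ((if i = l then σ l else 0) * (u l * v i))
          + u l ^ 2 * v i ^ 2 := by
      intro l i
      by_cases h : i = l
      · subst h; simp [Matrix.diagonal_apply_eq]; ring
      · rw [Matrix.diagonal_apply_ne' σ h]; simp [h]; ring
    have e1 : ∑ l : Fin m, ∑ i : Fin m, (if i = l then σ l ^ 2 else 0) =
        ∑ i, σ i ^ 2 := by simp
    have e2 : ∑ l : Fin m, ∑ i : Fin m,
        2 * ((if i = l then σ l else 0) * (u l * v i)) =
        2 * ∑ i, σ i * (u i * v i) := by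
      rw [Finset.mul_sum]
      apply Finset.sum_congr rfl; intro l _
      simp [mul_ite, ite_mul, mul_zero, zero_mul, Finset.sum_ite_eq]
    have e3 : ∑ l : Fin m, ∑ i : Fin m, u l ^ 2 * v i ^ 2 =
        (∑ l, u l ^ 2) * (∑ i, v i ^ 2) := by
      rw [Finset.sum_mul_sum]
    simp only [pt, Finset.sum_add_distrib, Finset.sum_sub_distrib]
    rw [e1, e2, e3]
  rw [expand]
  set P := ∑ l, u l ^ 2 with hP
  set Q := ∑ i, v i ^ 2 with hQ
  have hPn : 0 ≤ P := Finset.sum_nonneg fun _ _ => sq_nonneg _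
  have hQn : 0 ≤ Q := Finset.sum_nonneg fun _ _ => sq_nonneg _
  set t := Real.sqrt (P * Q) with ht
  have ht2 : t ^ 2 = P * Q := Real.sq_sqrt (mul_nonneg hPn hQn)
  have htn : 0 ≤ t := Real.sqrt_nonneg _
  have hcs : (∑ i, |u i| * |v i|) ≤ t := by
    have h1 : (∑ i, |u i| * |v i|) ^ 2 ≤ (∑ i, |u i| ^ 2) * (∑ i, |v i| ^ 2) :=
      Finset.sum_mul_sq_le_sq_mul_sq _ _ _
    have h2 : (∑ i, |u i| ^ 2) * (∑ i, |v i| ^ 2) = P * Q := by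
      simp [hP, hQ, sq_abs]
    have h3 : 0 ≤ ∑ i, |u i| * |v i| :=
      Finset.sum_nonneg fun i _ => mul_nonneg (abs_nonneg _) (abs_nonneg _)
    nlinarith [Real.sq_sqrt (mul_nonneg hPn hQn), Real.sqrt_nonneg (P * Q)]
  have hbound : (∑ i, σ i * (u i * v i)) ≤ σ z * t := by
    calc (∑ i, σ i * (u i * v i)) ≤ ∑ i, σ i * |u i * v i| := by
          apply Finset.sum_le_sum; intro i _
          exact mul_le_mul_of_nonneg_left (le_abs_self _) (h0 i)
      _ ≤ ∑ i, σ z * (|u i| * |v i|) := by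
          apply Finset.sum_le_sum; intro i _
          rw [abs_mul]
          have hzi : z ≤ i := by simp [hz, Fin.le_def]
          exact mul_le_mul_of_nonneg_right (hA hzi)
            (mul_nonneg (abs_nonneg _) (abs_nonneg _))
      _ = σ z * ∑ i, |u i| * |v i| := by rw [Finset.mul_sum]
      _ ≤ σ z * t := mul_le_mul_of_nonneg_left hcs (h0 z)
  have hsplit := tail_split hm σ
  nlinarith [sq_nonneg (t - σ z)]

lemma slice_lb (hm : 0 < m) (A : Matrix (Fin m) (Fin m) ℝ) (σ : Fin m → ℝ)
    (hA : Antitone σ) (h0 : ∀ i, 0 ≤ σ i) (U V : Matrix (Fin m) (Fin m) ℝ)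
    (hU : Uᵀ * U = 1) (hV : Vᵀ * V = 1) (hAeq : A = U * Matrix.diagonal σ * Vᵀ)
    (u v : Fin m → ℝ) :
    ∑ i ∈ Finset.univ.filter (fun i : Fin m => 1 ≤ (i : ℕ)), σ i ^ 2 ≤
      ∑ l, ∑ i, (A l i - u l * v i) ^ 2 := by
  have hUU : U * Uᵀ = 1 := mul_eq_one_comm.mp hU
  have hVV : V * Vᵀ = 1 := mul_eq_one_comm.mp hV
  have h1 : U * vecMulVec (Uᵀ *ᵥ u) (Vᵀ *ᵥ v) * Vᵀ = vecMulVec u v := by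
    rw [← conj_vecMulVec U V u v, ← mul_assoc, ← mul_assoc, hUU, one_mul,
      mul_assoc, hVV, mul_one]
  have hsub : A - vecMulVec u v =
      U * ((Matrix.diagonal σ - vecMulVec (Uᵀ *ᵥ u) (Vᵀ *ᵥ v)) * Vᵀ) := by
    rw [sub_mul, mul_sub, ← mul_assoc, ← mul_assoc, ← hAeq, h1]
  have step1 : ∑ l, ∑ i, (A l i - u l * v i) ^ 2 =
      ∑ l, ∑ i, ((A - vecMulVec u v) l i) ^ 2 := by
    simp [Matrix.sub_apply, vecMulVec_apply]
  rw [step1, hsub, frob_mul_left hU, frob_mul_right hV]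
  have := diag_lb hm σ hA h0 (Uᵀ *ᵥ u) (Vᵀ *ᵥ v)
  simpa [Matrix.sub_apply, vecMulVec_apply] using this

lemma slice_attain (hm : 0 < m) (A : Matrix (Fin m) (Fin m) ℝ) (σ : Fin m → ℝ)
    (U V : Matrix (Fin m) (Fin m) ℝ)
    (hU : Uᵀ * U = 1) (hV : Vᵀ * V = 1) (hAeq : A = U * Matrix.diagonal σ * Vᵀ) :
    ∃ u v : Fin m → ℝ, ∑ l, ∑ i, (A l i - u l * v i) ^ 2 =
      ∑ i ∈ Finset.univ.filter (fun i : Fin m => 1 ≤ (i : ℕ)), σ i ^ 2 := by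
  set z : Fin m := ⟨0, hm⟩ with hz
  refine ⟨fun l => σ z * U l z, fun i => V i z, ?_⟩
  set σ' : Fin m → ℝ := fun c => if c = z then 0 else σ c with hσ'
  have hvmv : vecMulVec (fun l => σ z * U l z) (fun i => V i z) =
      U * Matrix.diagonal (fun c => if c = z then σ z else 0) * Vᵀ := by
    ext l i
    simp only [vecMulVec_apply, Matrix.mul_apply, Matrix.mul_diagonal,
      Matrix.diagonal_apply, transpose_apply]
    simp only [mul_ite, ite_mul, mul_zero, zero_mul, Finset.sum_ite_eq,
      Finset.sum_ite_eq', Finset.mem_univ, if_true]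
    ring
  have hdd : Matrix.diagonal σ - Matrix.diagonal (fun c => if c = z then σ z else 0) =
      Matrix.diagonal σ' := by
    ext a b
    by_cases hab : a = b
    · subst hab
      by_cases haz : a = z <;>
        simp [Matrix.sub_apply, Matrix.diagonal_apply_eq, hσ', haz]
    · simp [Matrix.sub_apply, Matrix.diagonal_apply_ne _ hab]
  have hsub : A - vecMulVec (fun l => σ z * U l z) (fun i => V i z) =
      U * (Matrix.diagonal σ' * Vᵀ) := by
    rw [hAeq, hvmv, ← sub_mul, ← mul_sub, hdd, mul_assoc]
  have step1 : ∑ l, ∑ i, (A l i - (σ z * U l z) * V i z) ^ 2 =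
      ∑ l, ∑ i, ((A - vecMulVec (fun l => σ z * U l z) (fun i => V i z)) l i) ^ 2 := by
    simp [Matrix.sub_apply, vecMulVec_apply]
  rw [step1, hsub, frob_mul_left hU, frob_mul_right hV]
  have hdsum : ∑ l, ∑ i, (Matrix.diagonal σ' l i) ^ 2 = ∑ i, σ' i ^ 2 := by
    simp [Matrix.diagonal_apply, apply_ite (· ^ 2)]
  rw [hdsum]
  have h := Finset.sum_filter_add_sum_filter_not Finset.univ
    (fun i : Fin m => 1 ≤ (i : ℕ)) (fun i => σ' i ^ 2)
  have hnot : Finset.univ.filter (fun i : Fin m => ¬ 1 ≤ (i : ℕ)) = {z} := by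
    ext i
    simp only [Finset.mem_filter, Finset.mem_univ, true_and, Finset.mem_singleton]
    constructor
    · intro h; exact Fin.ext (by simp [hz]; omega)
    · intro h; subst h; simp [hz]
  rw [hnot, Finset.sum_singleton] at h
  have hzz : σ' z ^ 2 = 0 := by simp [hσ']
  have hfil : ∑ i ∈ Finset.univ.filter (fun i : Fin m => 1 ≤ (i : ℕ)), σ' i ^ 2 =
      ∑ i ∈ Finset.univ.filter (fun i : Fin m => 1 ≤ (i : ℕ)), σ i ^ 2 := by
    apply Finset.sum_congr rfl
    intro i hi
    simp only [Finset.mem_filter] at hi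
    have : i ≠ z := by
      intro h; subst h; simp [hz] at hi
    simp [hσ', this]
  rw [hzz, add_zero, hfil] at h
  rw [← h]

lemma rank_slice (hm : 0 < m) (A : Matrix (Fin m) (Fin m) ℝ) (σ : Fin m → ℝ)
    (hAnti : Antitone σ) (hpos : ∀ i, 0 ≤ σ i) (U V : Matrix (Fin m) (Fin m) ℝ)
    (hU : Uᵀ * U = 1) (hV : Vᵀ * V = 1) (hAeq : A = U * Matrix.diagonal σ * Vᵀ) :
    (∀ i ∈ Finset.univ.filter (fun i : Fin m => 1 ≤ (i : ℕ)), σ i = 0) ↔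
      A.rank ≤ 1 := by
  set z : Fin m := ⟨0, hm⟩ with hz
  constructor
  · intro h
    have h1 : A.rank ≤ (Matrix.diagonal σ).rank := by
      calc A.rank = (U * (Matrix.diagonal σ * Vᵀ)).rank := by rw [hAeq, mul_assoc]
        _ ≤ (Matrix.diagonal σ * Vᵀ).rank := Matrix.rank_mul_le_right _ _
        _ ≤ (Matrix.diagonal σ).rank := Matrix.rank_mul_le_left _ _
    refine h1.trans ?_
    rw [Matrix.rank_diagonal]
    rw [Fintype.card_le_one_iff]
    intro x y
    have hx : ((x.1 : Fin m) : ℕ) = 0 := by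
      by_contra hc
      exact x.2 (h x.1 (Finset.mem_filter.mpr ⟨Finset.mem_univ _, by omega⟩))
    have hy : ((y.1 : Fin m) : ℕ) = 0 := by
      by_contra hc
      exact y.2 (h y.1 (Finset.mem_filter.mpr ⟨Finset.mem_univ _, by omega⟩))
    exact Subtype.ext (Fin.ext (hx.trans hy.symm))
  · intro h i hi
    simp only [Finset.mem_filter, Finset.mem_univ, true_and] at hi
    by_contra hne
    have hD : Uᵀ * A * V = Matrix.diagonal σ := by
      rw [hAeq, ← mul_assoc, ← mul_assoc, hU, one_mul, mul_assoc, hV, mul_one]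
    have h2 : (Matrix.diagonal σ).rank ≤ A.rank := by
      calc (Matrix.diagonal σ).rank = (Uᵀ * A * V).rank := by rw [hD]
        _ ≤ (Uᵀ * A).rank := Matrix.rank_mul_le_left _ _
        _ ≤ A.rank := Matrix.rank_mul_le_right _ _
    have hcard : Fintype.card {c // σ c ≠ 0} ≤ 1 := by
      rw [← Matrix.rank_diagonal]
      exact h2.trans h
    have hσi : 0 < σ i := lt_of_le_of_ne (hpos i) (Ne.symm hne)
    have hσz : 0 < σ z := lt_of_lt_of_le hσi (hAnti (by simp [hz, Fin.le_def]))
    have : 1 < Fintype.card {c // σ c ≠ 0} := by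
      rw [Fintype.one_lt_card_iff]
      refine ⟨⟨z, ne_of_gt hσz⟩, ⟨i, ne_of_gt hσi⟩, ?_⟩
      intro hc
      have h4 : z = i := Subtype.ext_iff.mp hc
      have h5 : (z : ℕ) = (i : ℕ) := congrArg Fin.val h4
      simp [hz] at h5
      omega
    omega

end Aux

/-- The minimal Frobenius error of approximating `E` (`n = m²`) by a square-block Monarch
matrix equals `√(∑_{j,k} ∑_{i≥2} σ_i²(Ẽ_{:,j,k,:}))`, where `Ẽ_{:,j,k,:}` are the slices of
the reshaped 4-tensor with ordered singular values `σ j k`; in particular the minimum is 0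
iff every slice has rank at most 1. -/
theorem monarch_min_error (m : ℕ)
    (E : Matrix (Fin m × Fin m) (Fin m × Fin m) ℝ)
    (σ : Fin m → Fin m → Fin m → ℝ)
    (hσ : ∀ j k : Fin m, Antitone (σ j k) ∧ (∀ i, 0 ≤ σ j k i) ∧
      ∃ U V : Matrix (Fin m) (Fin m) ℝ, Uᵀ * U = 1 ∧ Vᵀ * V = 1 ∧
        (Matrix.of fun l i : Fin m => E (l, j) (k, i)) = U * Matrix.diagonal (σ j k) * Vᵀ) :
    IsLeast {y : ℝ | ∃ L R : Fin m → Matrix (Fin m) (Fin m) ℝ,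
        y = Real.sqrt (∑ i, ∑ l, ((E - shuffle m * BD L * shuffle m * BD R) i l) ^ 2)}
      (Real.sqrt (∑ j : Fin m, ∑ k : Fin m,
        ∑ i ∈ Finset.univ.filter (fun i : Fin m => 1 ≤ (i : ℕ)), (σ j k i) ^ 2)) ∧
    (Real.sqrt (∑ j : Fin m, ∑ k : Fin m,
        ∑ i ∈ Finset.univ.filter (fun i : Fin m => 1 ≤ (i : ℕ)), (σ j k i) ^ 2) = 0 ↔
      ∀ j k : Fin m,
        (Matrix.of fun l i : Fin m => E (l, j) (k, i)).rank ≤ 1) := by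
  obtain rfl | hm := Nat.eq_zero_or_pos m
  · constructor
    · constructor
      · exact ⟨0, 0, by simp⟩
      · rintro y ⟨L, R, rfl⟩
        simp only [Finset.univ_eq_empty, Finset.sum_empty, Real.sqrt_zero]
        exact le_refl 0
    · simp
  · have hAnti : ∀ j k, Antitone (σ j k) := fun j k => (hσ j k).1
    have hpos : ∀ j k i, 0 ≤ σ j k i := fun j k => (hσ j k).2.1
    choose U V hU hV hAeq using fun j k => (hσ j k).2.2
    constructor
    · constructor
      · -- membership: attained
        have hatt := fun j k => slice_attain hm
          (Matrix.of fun l i : Fin m => E (l, j) (k, i)) (σ j k)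
          (U j k) (V j k) (hU j k) (hV j k) (hAeq j k)
        choose u v huv using hatt
        refine ⟨fun j => Matrix.of fun l k => u j k l,
                fun k => Matrix.of fun j i => v j k i, ?_⟩
        congr 1
        rw [total_sum]
        apply Finset.sum_congr rfl
        intro j _
        apply Finset.sum_congr rfl
        intro k _
        have := huv j k
        simp only [Matrix.of_apply] at this ⊢
        exact this.symm
      · rintro y ⟨L, R, rfl⟩
        apply Real.sqrt_le_sqrt
        rw [total_sum]
        apply Finset.sum_le_sum
        intro j _
        apply Finset.sum_le_sum
        intro k _
        have := slice_lb hm (Matrix.of fun l i : Fin m => E (l, j) (k, i)) (σ j k)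
          (hAnti j k) (hpos j k) (U j k) (V j k) (hU j k) (hV j k) (hAeq j k)
          (fun l => L j l k) (fun i => R k j i)
        simp only [Matrix.of_apply] at this
        exact this
    · -- the iff
      rw [Real.sqrt_eq_zero']
      have hTnn : (0:ℝ) ≤ ∑ j : Fin m, ∑ k : Fin m,
          ∑ i ∈ Finset.univ.filter (fun i : Fin m => 1 ≤ (i : ℕ)), (σ j k i) ^ 2 :=
        Finset.sum_nonneg fun j _ => Finset.sum_nonneg fun k _ =>
          Finset.sum_nonneg fun i _ => sq_nonneg _
      constructor
      · intro h j k
        have hT0 : ∑ j : Fin m, ∑ k : Fin m,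
            ∑ i ∈ Finset.univ.filter (fun i : Fin m => 1 ≤ (i : ℕ)), (σ j k i) ^ 2 = 0 :=
          le_antisymm h hTnn
        have h1 := (Finset.sum_eq_zero_iff_of_nonneg fun j _ =>
          Finset.sum_nonneg fun k _ => Finset.sum_nonneg fun i _ => sq_nonneg
            (σ j k i)).mp hT0 j (Finset.mem_univ _)
        have h2 := (Finset.sum_eq_zero_iff_of_nonneg fun k _ =>
          Finset.sum_nonneg fun i _ => sq_nonneg (σ j k i)).mp h1 k (Finset.mem_univ _)
        have h3 : ∀ i ∈ Finset.univ.filter (fun i : Fin m => 1 ≤ (i : ℕ)),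
            σ j k i = 0 := by
          intro i hi
          have := (Finset.sum_eq_zero_iff_of_nonneg fun i _ =>
            sq_nonneg (σ j k i)).mp h2 i hi
          exact pow_eq_zero_iff (by norm_num) |>.mp this
        exact (rank_slice hm (Matrix.of fun l i : Fin m => E (l, j) (k, i)) (σ j k)
          (hAnti j k) (hpos j k) (U j k) (V j k) (hU j k) (hV j k) (hAeq j k)).mp h3
      · intro h
        apply le_of_eq
        apply Finset.sum_eq_zero
        intro j _
        apply Finset.sum_eq_zero
        intro k _
        apply Finset.sum_eq_zero
        intro i hi
        have h3 := (rank_slice hm (Matrix.of fun l i : Fin m => E (l, j) (k, i)) (σ j k)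
          (hAnti j k) (hpos j k) (U j k) (V j k) (hU j k) (hV j k) (hAeq j k)).mpr (h j k)
        rw [h3 i hi]
        ring
end
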